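/- If x ≥ 0 and (n−1)T + x/v_f ≤ t ≤ nT + x/v_f, then the Lax–Hopf solution associated with the n-th upstream boundary value condition satisfies M_{γ_n}(t, x) = Σ_{i=1}^{n−1} q_in(i)·T + q_in(n)·(t − x/v_f − (n−1)T). -/

import Mathlib

/-- The triangular fundamental diagram: `ψ(ρ) = v_f·ρ` for `ρ ≤ ρ_c` and
`ψ(ρ) = w·(ρ − ρ_m)` otherwise. -/
noncomputable def fd (vf w ρc ρm : ℝ) (ρ : ℝ) : ℝ :=
  if ρ ≤ ρc then vf * ρ else w * (ρ - ρm)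

/-- The transform `φ*(u) = sup_{p ∈ [0, ρ_m]} (p·u + ψ(p))`. -/
noncomputable def phiStar (vf w ρc ρm : ℝ) (u : ℝ) : ℝ :=
  sSup ((fun p => p * u + fd vf w ρc ρm p) '' Set.Icc 0 ρm)

/-- The Lax–Hopf solution associated with a value condition `c : ℝ × ℝ → ℝ ∪ {+∞}`
(modeled with values in `EReal`):
`M_c(t, x) = inf { c(t − T, x + T·u) + T·φ*(u) : T ≥ 0, u ∈ [−v_f, −w] }`. -/
noncomputable def laxHopf (vf w ρc ρm : ℝ) (c : ℝ × ℝ → EReal) (t x : ℝ) : EReal :=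
  ⨅ (T : ℝ) (_ : 0 ≤ T) (u : ℝ) (_ : u ∈ Set.Icc (-vf) (-w)),
    c (t - T, x + T * u) + ((T * phiStar vf w ρc ρm u : ℝ) : EReal)


/-- The `n`-th upstream boundary value condition (at position `0`): for
`t ∈ [(n−1)T, nT]`, `γ_n(t, 0) = Σ_{i=1}^{n−1} q_in(i)·T + q_in(n)·(t − (n−1)T)`,
and `+∞` elsewhere. -/
noncomputable def upCond (T : ℝ) (qin : ℕ → ℝ) (n : ℕ) : ℝ × ℝ → EReal := fun p =>
  if p.2 = 0 ∧ ((n : ℝ) - 1) * T ≤ p.1 ∧ p.1 ≤ (n : ℝ) * T then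
    ((((∑ i ∈ Finset.Icc 1 (n - 1), qin i * T)
        + qin n * (p.1 - ((n : ℝ) - 1) * T)) : ℝ) : EReal)
  else ⊤

/-- If `x ≥ 0` and `(n−1)T + x/v_f ≤ t ≤ nT + x/v_f`, then
`M_{γ_n}(t, x) = Σ_{i=1}^{n−1} q_in(i)·T + q_in(n)·(t − x/v_f − (n−1)T)`. -/
theorem laxHopf_upCond_mid (vf ρc ρm w T : ℝ) (hvf : 0 < vf) (hρc : 0 < ρc)
    (hρcm : ρc < ρm) (hw : w = vf * ρc / (ρc - ρm)) (hT : 0 < T)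
    (n : ℕ) (hn : 1 ≤ n) (qin : ℕ → ℝ)
    (hq : ∀ i : ℕ, 1 ≤ i → i ≤ n → qin i ∈ Set.Icc 0 (ρc * vf))
    (t x : ℝ) (hx : 0 ≤ x)
    (ht1 : ((n : ℝ) - 1) * T + x / vf ≤ t) (ht2 : t ≤ (n : ℝ) * T + x / vf) :
    laxHopf vf w ρc ρm (upCond T qin n) t x =
      ((((∑ i ∈ Finset.Icc 1 (n - 1), qin i * T)
          + qin n * (t - x / vf - ((n : ℝ) - 1) * T)) : ℝ) : EReal) :=  by
  have hvf' : vf ≠ 0 := ne_of_gt hvf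
  have hwneg : w < 0 := by
    rw [hw]
    apply div_neg_of_pos_of_neg
    · positivity
    · linarith
  have hcm : ρc - ρm ≠ 0 := sub_ne_zero.mpr (ne_of_lt hρcm)
  have hwsc : w * (ρc - ρm) = vf * ρc := by
    rw [hw, div_mul_cancel₀ _ hcm]
  have hup : ∀ a b : ℝ, b = 0 → ((n:ℝ)-1)*T ≤ a → a ≤ (n:ℝ)*T →
      upCond T qin n (a, b) =
        ((((∑ i ∈ Finset.Icc 1 (n - 1), qin i * T)
          + qin n * (a - ((n : ℝ) - 1) * T)) : ℝ) : EReal) := by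
    intro a b hb h1 h2
    simp only [upCond]
    rw [if_pos ⟨hb, h1, h2⟩]
  have hbdd : ∀ u : ℝ, BddAbove ((fun p => p * u + fd vf w ρc ρm p) '' Set.Icc 0 ρm) := by
    intro u
    refine ⟨ρm * |u| + (vf * ρm + |w| * ρm), ?_⟩
    rintro y ⟨p, ⟨hp0, hpm⟩, rfl⟩
    have h1 : p * u ≤ ρm * |u| := by
      calc p * u ≤ |p * u| := le_abs_self _
        _ = |p| * |u| := abs_mul _ _
        _ ≤ ρm * |u| := by
            apply mul_le_mul_of_nonneg_right _ (abs_nonneg _)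
            rw [abs_of_nonneg hp0]; exact hpm
    have h2 : fd vf w ρc ρm p ≤ vf * ρm + |w| * ρm := by
      unfold fd; split_ifs with h
      · nlinarith [abs_nonneg w, mul_pos hvf (hρc.trans hρcm)]
      · have h3 : w * (p - ρm) ≤ |w| * ρm := by
          calc w * (p - ρm) ≤ |w * (p - ρm)| := le_abs_self _
            _ = |w| * |p - ρm| := abs_mul _ _
            _ ≤ |w| * ρm := by
                apply mul_le_mul_of_nonneg_left _ (abs_nonneg _)
                rw [abs_of_nonpos (by linarith)]; linarith
        nlinarith [mul_pos hvf (hρc.trans hρcm)]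
    show p * u + fd vf w ρc ρm p ≤ _
    linarith
  have hfd0 : fd vf w ρc ρm 0 = 0 := by simp [fd, hρc.le]
  have hphi_vf : phiStar vf w ρc ρm (-vf) = 0 := by
    unfold phiStar
    apply le_antisymm
    · apply csSup_le ((Set.nonempty_Icc.mpr (by linarith)).image _)
      rintro y ⟨p, ⟨hp0, hpm⟩, rfl⟩
      simp only
      unfold fd; split_ifs with h
      · nlinarith
      · push_neg at h
        have h4 : (w - vf) * (p - ρc) ≤ 0 :=
          mul_nonpos_of_nonpos_of_nonneg (by linarith) (by linarith)
        nlinarith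
    · apply le_csSup (hbdd _)
      exact ⟨0, ⟨le_refl 0, by linarith⟩, by simp [hfd0]⟩
  have hphi_lb : ∀ u : ℝ, ρc * u + vf * ρc ≤ phiStar vf w ρc ρm u := by
    intro u
    apply le_csSup (hbdd u)
    refine ⟨ρc, ⟨hρc.le, le_of_lt hρcm⟩, ?_⟩
    simp [fd]
  have hqn := hq n hn (le_refl n)
  apply le_antisymm
  · unfold laxHopf
    have h1 : (0:ℝ) ≤ x / vf := div_nonneg hx hvf.le
    have h2 : -vf ∈ Set.Icc (-vf) (-w) := ⟨le_refl _, by linarith⟩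
    refine iInf_le_of_le (x/vf) (iInf_le_of_le h1 (iInf_le_of_le (-vf) (iInf_le_of_le h2 ?_)))
    have hx0 : x + x / vf * (-vf) = 0 := by field_simp; ring
    rw [hx0, hphi_vf, mul_zero, hup (t - x/vf) 0 rfl (by linarith) (by linarith),
      EReal.coe_zero, add_zero, EReal.coe_le_coe_iff]
  · unfold laxHopf
    refine le_iInf fun S => le_iInf fun hS => le_iInf fun u => le_iInf fun hu => ?_
    by_cases hc : x + S * u = 0 ∧ ((n:ℝ)-1)*T ≤ t - S ∧ t - S ≤ (n:ℝ)*T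
    · obtain ⟨hxu, hta, htb⟩ := hc
      rw [hup (t - S) (x + S * u) hxu hta htb, ← EReal.coe_add, EReal.coe_le_coe_iff]
      have hSlb : x / vf ≤ S := by
        have hu1 : -vf ≤ u := hu.1
        have : S * (-vf) ≤ S * u := mul_le_mul_of_nonneg_left hu1 hS
        rw [div_le_iff₀ hvf]
        nlinarith
      have hphi := mul_le_mul_of_nonneg_left (hphi_lb u) hS
      have hB : 0 ≤ (ρc * vf - qin n) * (S - x / vf) :=
        mul_nonneg (by linarith [hqn.2]) (by linarith)
      have hxy : x = vf * (x / vf) := by field_simp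
      nlinarith [hqn.1, hqn.2]
    · have : upCond T qin n (t - S, x + S * u) = ⊤ := by
        simp only [upCond]
        rw [if_neg hc]
      rw [this, EReal.top_add_coe]
      exact le_top
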